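/- Fix an integer b ≥ 2 and let B = {b^i : i ∈ ℕ}. There is no real number x such that x∗B = {x·b^i mod 1 : i ∈ ℕ} is well-ordered by the usual order on ℝ with order type α satisfying ω ≤ α < ω². -/

import Mathlib

/-- The order type of a well-ordered set of reals. -/
noncomputable def orderType (s : Set ℝ) (h : s.IsWF) : Ordinal :=
  haveI : WellFoundedLT s := ⟨h⟩
  Ordinal.type ((· < ·) : s → s → Prop)

open Set Filter Topology

lemma orderType_lt_omega0_of_finite {s : Set ℝ} (h : s.IsWF) (hfin : s.Finite) :
    orderType s h < Ordinal.omega0 := by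
  haveI : WellFoundedLT s := ⟨h⟩
  haveI := hfin.fintype
  unfold orderType
  rw [Ordinal.type_fintype]
  exact Ordinal.nat_lt_omega0 _

lemma omega0_sq_le_orderType {s : Set ℝ} (h : s.IsWF) (f : ℕ → ℕ → ℝ)
    (hmem : ∀ n k, f n k ∈ s)
    (hlt : ∀ a b : ℕ × ℕ, Prod.Lex (· < ·) (· < ·) a b → f a.1 a.2 < f b.1 b.2) :
    Ordinal.omega0 ^ 2 ≤ orderType s h := by
  haveI : WellFoundedLT s := ⟨h⟩
  unfold orderType
  rw [pow_two, ← Ordinal.type_nat_lt, ← Ordinal.type_prod_lex]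
  exact (RelEmbedding.ofMonotone (fun q : ℕ × ℕ => (⟨f q.1 q.2, hmem _ _⟩ : s))
    (fun a b hab => by exact_mod_cast hlt a b hab)).ordinal_type_le

lemma exists_strictMono_mem {S : Set ℝ} (hwf : S.IsWF) (hinf : S.Infinite) :
    ∃ g : ℕ → ℝ, StrictMono g ∧ ∀ n, g n ∈ S := by
  have key : ∀ t : {t : Set ℝ // t ⊆ S ∧ t.Infinite},
      ∃ q : ℝ × {t : Set ℝ // t ⊆ S ∧ t.Infinite}, q.1 ∈ t.1 ∧ q.2.1 ⊆ Set.Ioi q.1 := by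
    rintro ⟨t, hts, htinf⟩
    have hwt : t.IsWF := hwf.mono hts
    have hne : t.Nonempty := htinf.nonempty
    refine ⟨⟨hwt.min hne, ⟨t ∩ Set.Ioi (hwt.min hne), fun y hy => hts hy.1, ?_⟩⟩,
      hwt.min_mem hne, fun y hy => hy.2⟩
    refine (htinf.diff (Set.finite_singleton (hwt.min hne))).mono ?_
    rintro y ⟨hyt, hyne⟩
    exact ⟨hyt, lt_of_le_of_ne (not_lt.1 (hwt.not_lt_min hne hyt))
      (Ne.symm (by simpa using hyne))⟩
  choose q h1 h2 using key
  let F : ℕ → {t : Set ℝ // t ⊆ S ∧ t.Infinite} :=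
    fun n => Nat.rec ⟨S, subset_rfl, hinf⟩ (fun _ t => (q t).2) n
  refine ⟨fun n => (q (F n)).1, strictMono_nat_of_lt_succ fun n => ?_,
    fun n => (F n).2.1 (h1 (F n))⟩
  exact h2 (F n) (h1 (F (n + 1)))

lemma infinite_inter_Ioo {S : Set ℝ} {p : ℝ} (h : ∀ c < p, (S ∩ Set.Ioo c p).Nonempty)
    {c : ℝ} (hc : c < p) : (S ∩ Set.Ioo c p).Infinite := by
  intro hfin
  obtain ⟨m, hm, hmax⟩ := Set.exists_max_image _ id hfin (h c hc)
  obtain ⟨y, hyS, hy⟩ := h m hm.2.2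
  exact absurd (hmax y ⟨hyS, lt_trans hm.2.1 hy.1, hy.2⟩) (not_le.2 hy.1)


lemma exists_left_accumulation {S T : Set ℝ} (hWF : S.IsWF) (hbdd : Bornology.IsBounded S)
    (hTS : T ⊆ S) (hT : T.Infinite) :
    ∃ p ∈ closure T, ∀ c < p, (S ∩ Set.Ioo c p).Nonempty := by
  have f : ℕ ↪ T := hT.natEmbedding
  have hmem : ∀ n, ((f n : ℝ)) ∈ T := fun n => (f n).2
  obtain ⟨a, haT, φ, hφ, hconv⟩ := tendsto_subseq_of_bounded (hbdd.subset hTS) hmem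
  refine ⟨a, haT, ?_⟩
  have hinj : Function.Injective fun n => ((f n : ℝ)) := fun m n h =>
    f.injective (Subtype.ext h)
  have claim : ∀ ε > 0, ∃ y ∈ S, y ≠ a ∧ |y - a| < ε := by
    intro ε hε
    obtain ⟨N, hN⟩ := Filter.eventually_atTop.1 (hconv.eventually (Metric.ball_mem_nhds a hε))
    have h1 : |((f (φ N) : ℝ)) - a| < ε := by
      have := hN N le_rfl; rwa [Real.dist_eq] at this
    have h2 : |((f (φ (N + 1)) : ℝ)) - a| < ε := by
      have := hN (N + 1) (by omega); rwa [Real.dist_eq] at this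
    have hne : ((f (φ N) : ℝ)) ≠ ((f (φ (N + 1)) : ℝ)) := by
      intro h
      exact absurd (hinj h) (hφ.injective.ne (by omega))
    rcases eq_or_ne ((f (φ N) : ℝ)) a with h | h
    · exact ⟨_, hTS (hmem (φ (N + 1))), fun hh => hne (by rw [h, hh]), h2⟩
    · exact ⟨_, hTS (hmem (φ N)), h, h1⟩
  intro c hc
  rcases (S ∩ Set.Ioi a).eq_empty_or_nonempty with hemp | hne
  · obtain ⟨y, hyS, hyne, hylt⟩ := claim (a - c) (by linarith)
    have hy_lt_a : y < a := by
      rcases lt_or_gt_of_ne hyne with h | h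
      · exact h
      · exfalso
        have hmem' : y ∈ S ∩ Set.Ioi a := ⟨hyS, h⟩
        rw [hemp] at hmem'; exact hmem'
    obtain ⟨hl, hr⟩ := abs_lt.1 hylt
    exact ⟨y, hyS, by constructor <;> [linarith; exact hy_lt_a]⟩
  · have hwf' := hWF.mono (Set.inter_subset_left (s := S) (t := Set.Ioi a))
    set m := hwf'.min hne with hm
    have hmmem := hwf'.min_mem hne
    have ham : a < m := hmmem.2
    set ε := min (a - c) (m - a) with hε
    have hεpos : 0 < ε := lt_min (by linarith) (by linarith)
    obtain ⟨y, hyS, hyne, hylt⟩ := claim ε hεpos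
    have hy_lt_a : y < a := by
      rcases lt_or_gt_of_ne hyne with h | h
      · exact h
      · exfalso
        have hym : ¬y < m := hwf'.not_lt_min hne (Set.mem_inter hyS h)
        have : m - a ≤ |y - a| := by
          rw [abs_of_pos (by linarith : 0 < y - a)]
          push_neg at hym; linarith
        exact absurd hylt (not_lt.2 (le_trans (min_le_right _ _) this))
    obtain ⟨hl, hr⟩ := abs_lt.1 hylt
    have : ε ≤ a - c := min_le_left _ _
    exact ⟨y, hyS, by constructor <;> [linarith; exact hy_lt_a]⟩


lemma exists_seq_tendsto_left {S : Set ℝ} {p : ℝ} (h : ∀ c < p, (S ∩ Set.Ioo c p).Nonempty) :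
    ∃ g : ℕ → ℝ, StrictMono g ∧ (∀ n, g n ∈ S) ∧ (∀ n, g n < p) ∧
      Filter.Tendsto g Filter.atTop (𝓝 p) := by
  have key : ∀ c : ℝ, c < p → ∀ n : ℕ, ∃ y, (y ∈ S ∧ y < p) ∧ max c (p - 1 / (n + 1)) < y := by
    intro c hc n
    have h1 : (0:ℝ) < 1 / (n + 1) := by positivity
    have : max c (p - 1 / (n + 1)) < p := max_lt hc (by linarith)
    obtain ⟨y, hyS, hy⟩ := h _ this
    exact ⟨y, ⟨hyS, hy.2⟩, hy.1⟩
  choose Y hY1 hY2 using key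
  let g : ℕ → {y : ℝ // y ∈ S ∧ y < p} := fun n =>
    Nat.rec ⟨Y (p - 1) (by linarith) 0, hY1 _ _ _⟩
      (fun n prev => ⟨Y prev.1 prev.2.2 (n + 1), hY1 _ _ _⟩) n
  have hgmono : StrictMono fun n => (g n).1 := by
    refine strictMono_nat_of_lt_succ fun n => ?_
    exact lt_of_le_of_lt (le_max_left _ _) (hY2 (g n).1 (g n).2.2 (n + 1))
  have hlow : ∀ n : ℕ, p - 1 / ((n : ℝ) + 1 + 1) < (g (n + 1)).1 := fun n => by
    have h := lt_of_le_of_lt (le_max_right _ _) (hY2 (g n).1 (g n).2.2 (n + 1))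
    push_cast at h
    exact h
  refine ⟨fun n => (g n).1, hgmono, fun n => (g n).2.1, fun n => (g n).2.2, ?_⟩
  have hlowtend : Filter.Tendsto (fun n : ℕ => p - 1 / ((n:ℝ) + 1)) atTop (𝓝 p) := by
    have := tendsto_one_div_add_atTop_nhds_zero_nat (𝕜 := ℝ)
    have h2 : Filter.Tendsto (fun _ : ℕ => p) atTop (𝓝 p) := tendsto_const_nhds
    simpa using h2.sub this
  apply tendsto_of_tendsto_of_tendsto_of_le_of_le' hlowtend tendsto_const_nhds
  · filter_upwards [eventually_ge_atTop 1] with n hn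
    obtain ⟨m, rfl⟩ := Nat.exists_eq_add_of_le hn
    have heq : ((1 + m : ℕ) : ℝ) = (m : ℝ) + 1 := by push_cast; ring
    rw [heq]
    have h2 : p - 1 / ((m:ℝ) + 1 + 1) ≤ (g (1 + m)).1 := by
      rw [(by omega : 1 + m = m + 1)]; exact (hlow m).le
    linarith
  · filter_upwards with n; exact (g n).2.2.le

lemma rat_of_mul_eq {x : ℝ} {d k : ℤ} (hd : d ≠ 0) (h : x * (d : ℝ) = (k : ℝ)) :
    ∃ r : ℚ, x = (r : ℝ) := by
  refine ⟨(k : ℚ) / (d : ℚ), ?_⟩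
  have hd' : (d : ℝ) ≠ 0 := Int.cast_ne_zero.2 hd
  push_cast
  field_simp
  linarith [h]

lemma rat_of_pow_collision {b : ℕ} (hb : 2 ≤ b) {p : ℝ} {i i' : ℕ} (hii : i < i')
    (m m' : ℤ) (heq : (b : ℝ) ^ i * p - (m : ℝ) = (b : ℝ) ^ i' * p - (m' : ℝ)) :
    ∃ r : ℚ, p = (r : ℝ) := by
  have hblt : (b : ℤ) ^ i < (b : ℤ) ^ i' :=
    pow_lt_pow_right₀ (by exact_mod_cast hb : (1 : ℤ) < b) hii
  refine rat_of_mul_eq (d := (b:ℤ) ^ i' - (b:ℤ) ^ i) (k := m' - m) (by omega) ?_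
  push_cast
  ring_nf
  ring_nf at heq
  linarith

lemma fract_int_mul_fract (n : ℤ) (t : ℝ) :
    Int.fract ((n : ℝ) * Int.fract t) = Int.fract ((n : ℝ) * t) := by
  have h : (n : ℝ) * Int.fract t = (n : ℝ) * t - ((n * ⌊t⌋ : ℤ) : ℝ) := by
    rw [Int.fract]; push_cast; ring
  rw [h, Int.fract_sub_intCast]


lemma round_mul_step {b : ℕ} (hb : 2 ≤ b) {t : ℝ} (h : (b:ℝ) * |t - round t| < 1 / 2) :
    |(b:ℝ) * t - round ((b:ℝ) * t)| = (b:ℝ) * |t - round t| := by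
  have hb0 : (0:ℝ) ≤ (b:ℝ) := by positivity
  have hround : round ((b:ℝ) * t) = (b:ℤ) * round t := by
    have hsplit : (b:ℝ) * t = (((b:ℤ) * round t : ℤ) : ℝ) + ((b:ℝ) * t - (b:ℝ) * (round t : ℝ)) := by
      push_cast; ring
    have habs : |(b:ℝ) * t - (b:ℝ) * (round t : ℝ)| < 1 / 2 := by
      rw [← mul_sub, abs_mul, abs_of_nonneg hb0]; exact h
    obtain ⟨h1, h2⟩ := abs_lt.1 habs
    have hz : round ((b:ℝ) * t - (b:ℝ) * (round t : ℝ)) = 0 :=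
      round_eq_zero_iff.2 ⟨by linarith, by linarith⟩
    rw [hsplit, round_intCast_add, hz, add_zero]
  rw [hround]
  push_cast
  rw [← mul_sub, abs_mul, abs_of_nonneg hb0]



lemma den_mul_cast (r : ℚ) : ((r.den : ℝ)) * (r : ℝ) = (r.num : ℝ) := by
  rw [Rat.cast_def]
  have hd : ((r.den : ℝ)) ≠ 0 := Nat.cast_ne_zero.2 r.den_nz
  field_simp

lemma finite_of_rat (b : ℕ) (x : ℝ) (r : ℚ) (hx : x = (r : ℝ)) :
    ((fun i : ℕ => Int.fract (x * (b : ℝ) ^ i)) '' Set.univ).Finite := by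
  apply Set.Finite.subset
    (Set.Finite.image (fun k : ℤ => (k : ℝ) / (r.den : ℝ)) (Set.finite_Icc (0 : ℤ) r.den))
  rintro y ⟨i, -, rfl⟩
  set t := x * (b : ℝ) ^ i with ht
  have hden : (0 : ℝ) < (r.den : ℝ) := by exact_mod_cast r.pos
  have hnum : ((r.den : ℝ)) * x = (r.num : ℝ) := by rw [hx]; exact den_mul_cast r
  have h3 : (r.den : ℝ) * x * (b:ℝ)^i = (r.num:ℝ) * (b:ℝ)^i := by rw [hnum]
  have key : (r.den : ℝ) * Int.fract t = ((r.num * (b:ℤ) ^ i - (r.den : ℤ) * ⌊t⌋ : ℤ) : ℝ) := by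
    rw [Int.fract]
    push_cast
    rw [ht]
    linear_combination h3
  set k : ℤ := r.num * (b:ℤ) ^ i - (r.den : ℤ) * ⌊t⌋ with hk
  have h0 : (0:ℝ) ≤ (k:ℝ) := by rw [← key]; exact mul_nonneg hden.le (Int.fract_nonneg t)
  have h1 : (k:ℝ) < (r.den : ℝ) := by
    rw [← key]
    calc (r.den : ℝ) * Int.fract t < (r.den : ℝ) * 1 :=
      mul_lt_mul_of_pos_left (Int.fract_lt_one t) hden
    _ = (r.den : ℝ) := mul_one _
  refine ⟨k, ⟨by exact_mod_cast h0, by exact_mod_cast h1.le⟩, ?_⟩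
  show (k : ℝ) / (r.den : ℝ) = Int.fract t
  rw [← key]
  field_simp

lemma mem_shift {b : ℕ} {x y : ℝ}
    (hy : y ∈ (fun i : ℕ => Int.fract (x * (b : ℝ) ^ i)) '' Set.univ) (i : ℕ) :
    Int.fract ((b : ℝ) ^ i * y) ∈ (fun i : ℕ => Int.fract (x * (b : ℝ) ^ i)) '' Set.univ := by
  obtain ⟨k, -, rfl⟩ := hy
  refine ⟨k + i, trivial, ?_⟩
  show Int.fract (x * (b:ℝ) ^ (k + i)) = Int.fract ((b:ℝ) ^ i * Int.fract (x * (b:ℝ) ^ k))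
  have : ((((b:ℤ) ^ i : ℤ)) : ℝ) = (b:ℝ) ^ i := by push_cast; ring
  rw [← this, fract_int_mul_fract ((b:ℤ)^i) (x * (b:ℝ)^k)]
  congr 1
  push_cast
  ring

lemma exists_common_den {L : Set ℝ} (hfin : L.Finite) (hrat : ∀ p ∈ L, ∃ r : ℚ, p = (r : ℝ)) :
    ∃ Q : ℕ, 0 < Q ∧ ∀ p ∈ L, ∃ k : ℤ, (Q : ℝ) * p = (k : ℝ) := by
  revert hrat
  refine Set.Finite.induction_on (motive := fun L _ => (∀ p ∈ L, ∃ r : ℚ, p = (r : ℝ)) →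
      ∃ Q : ℕ, 0 < Q ∧ ∀ p ∈ L, ∃ k : ℤ, (Q : ℝ) * p = (k : ℝ)) L hfin
    (fun _ => ⟨1, one_pos, fun p hp => by simp at hp⟩) ?_
  intro a s has hsf ih hrat
  obtain ⟨Q, hQpos, hQ⟩ := ih (fun p hp => hrat p (Set.mem_insert_of_mem a hp))
  obtain ⟨r, hr⟩ := hrat a (Set.mem_insert a s)
  ·
    refine ⟨Q * r.den, Nat.mul_pos hQpos r.pos, fun p hp => ?_⟩
    rcases Set.mem_insert_iff.1 hp with rfl | hps
    · refine ⟨Q * r.num, ?_⟩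
      push_cast
      rw [hr]
      have := den_mul_cast r
      nlinarith [this]
    · obtain ⟨k, hk⟩ := hQ p hps
      refine ⟨k * r.den, ?_⟩
      push_cast
      nlinarith [hk]

/-- For `b ≥ 2` and `B = {bⁱ : i ∈ ℕ}`, there is no real `x` with `x∗B` well-ordered
of order type `α` satisfying `ω ≤ α < ω²`. -/
theorem stmt_18 (b : ℕ) (hb : 2 ≤ b) :
    ¬∃ (x : ℝ) (hWF : ((fun i : ℕ => Int.fract (x * (b : ℝ) ^ i)) '' Set.univ).IsWF),
      Ordinal.omega0 ≤ orderType _ hWF ∧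
        orderType _ hWF < Ordinal.omega0 ^ 2 := by
  rintro ⟨x, hWF, hω, hω2⟩
  set S : Set ℝ := (fun i : ℕ => Int.fract (x * (b : ℝ) ^ i)) '' Set.univ with hSdef
  have hbR : (1:ℝ) < (b:ℝ) := by exact_mod_cast lt_of_lt_of_le one_lt_two hb
  have hbpos : (0:ℝ) < (b:ℝ) := by linarith
  have hSsub : S ⊆ Set.Icc 0 1 := by
    rintro y ⟨i, -, rfl⟩; exact ⟨Int.fract_nonneg _, (Int.fract_lt_one _).le⟩
  have hSbdd : Bornology.IsBounded S := (Metric.isBounded_Icc (0:ℝ) 1).subset hSsub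
  have hinf : S.Infinite := by
    by_contra h
    rw [Set.not_infinite] at h
    exact absurd hω (not_le.2 (orderType_lt_omega0_of_finite hWF h))
  have hirr : ∀ r : ℚ, x ≠ (r : ℝ) := fun r hxr =>
    Set.not_infinite.2 (finite_of_rat b x r hxr) hinf
  set s : ℕ → ℝ := fun i => Int.fract (x * (b:ℝ) ^ i) with hsdef
  have hs_mem : ∀ i, s i ∈ S := fun i => ⟨i, trivial, rfl⟩
  have hs_key : ∀ i j : ℕ, i < j → s i = s j → False := by
    intro i j hlt heq
    simp only [hsdef, Int.fract] at heq
    have hcoll : (b:ℝ)^i * x - ((⌊x*(b:ℝ)^i⌋ : ℤ):ℝ) = (b:ℝ)^j * x - ((⌊x*(b:ℝ)^j⌋ : ℤ):ℝ) := by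
      linear_combination heq
    obtain ⟨r, hr⟩ := rat_of_pow_collision hb hlt _ _ hcoll
    exact hirr r hr
  have hs_inj : Function.Injective s := by
    intro i j hij
    rcases lt_trichotomy i j with h | h | h
    · exact (hs_key i j h hij).elim
    · exact h
    · exact (hs_key j i h hij.symm).elim
  have hs_rec : ∀ i, s (i+1) = Int.fract ((b:ℝ) * s i) := by
    intro i
    show Int.fract (x * (b:ℝ)^(i+1)) = Int.fract ((b:ℝ) * Int.fract (x * (b:ℝ)^i))
    have hfr := fract_int_mul_fract (b:ℤ) (x * (b:ℝ)^i)
    push_cast at hfr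
    rw [hfr]
    congr 1
    ring
  set L : Set ℝ := {p : ℝ | ∀ c < p, (S ∩ Set.Ioo c p).Nonempty} with hLdef
  rcases L.finite_or_infinite with hLfin | hLinf
  · -- L finite : dynamics contradiction
    have hLrat : ∀ p ∈ L, ∃ r : ℚ, p = (r : ℝ) := by
      intro p hp
      obtain ⟨g, hgmono, hgS, hglt, hgtend⟩ := exists_seq_tendsto_left hp
      have hQi : ∀ i : ℕ, ∃ m : ℤ, ((b:ℝ)^i * p - (m:ℝ)) ∈ L := by
        intro i
        have hbipos : (0:ℝ) < (b:ℝ)^i := by positivity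
        have hub : ∀ j, (b:ℝ)^i * g j < (b:ℝ)^i * p := fun j =>
          mul_lt_mul_of_pos_left (hglt j) hbipos
        have hfl : ∀ j, ⌊(b:ℝ)^i * g j⌋ ≤ ⌊(b:ℝ)^i * p⌋ := fun j =>
          Int.floor_le_floor (hub j).le
        obtain ⟨M, ⟨j0, hj0⟩, hMmax⟩ := Int.exists_greatest_of_bdd
          (P := fun z => ∃ j, ⌊(b:ℝ)^i * g j⌋ = z)
          ⟨⌊(b:ℝ)^i * p⌋, fun z hz => by obtain ⟨j, rfl⟩ := hz; exact hfl j⟩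
          ⟨⌊(b:ℝ)^i * g 0⌋, 0, rfl⟩
        have hconst : ∀ j, j0 ≤ j → ⌊(b:ℝ)^i * g j⌋ = M := by
          intro j hj
          refine le_antisymm (hMmax _ ⟨j, rfl⟩) ?_
          rw [← hj0]
          exact Int.floor_le_floor (mul_le_mul_of_nonneg_left (hgmono.monotone hj) hbipos.le)
        refine ⟨M, ?_⟩
        intro c hc
        have htend : Filter.Tendsto (fun j => (b:ℝ)^i * g j - (M:ℝ)) Filter.atTop
            (𝓝 ((b:ℝ)^i * p - (M:ℝ))) := (hgtend.const_mul ((b:ℝ)^i)).sub tendsto_const_nhds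
        have hev := (htend.eventually (eventually_gt_nhds hc)).and
          (Filter.eventually_ge_atTop j0)
        obtain ⟨j, hj1, hj2⟩ := hev.exists
        have hzS : Int.fract ((b:ℝ)^i * g j) ∈ S := mem_shift (hgS j) i
        have hzeq : Int.fract ((b:ℝ)^i * g j) = (b:ℝ)^i * g j - (M:ℝ) := by
          rw [Int.fract, hconst j hj2]
        exact ⟨(b:ℝ)^i * g j - (M:ℝ), hzeq ▸ hzS, hj1, sub_lt_sub_right (hub j) _⟩
      choose m hm using hQi
      haveI : Finite ↥L := hLfin.to_subtype
      obtain ⟨i, i', hne, heq⟩ := Finite.exists_ne_map_eq_of_infinite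
        (fun i : ℕ => (⟨(b:ℝ)^i * p - (m i : ℝ), hm i⟩ : L))
      have hval : (b:ℝ)^i * p - (m i : ℝ) = (b:ℝ)^i' * p - (m i' : ℝ) :=
        congrArg Subtype.val heq
      rcases hne.lt_or_gt with h | h
      · exact rat_of_pow_collision hb h (m i) (m i') hval
      · exact rat_of_pow_collision hb h (m i') (m i) hval.symm
    obtain ⟨Q, hQpos, hQ⟩ := exists_common_den hLfin hLrat
    have hQR : (0:ℝ) < (Q:ℝ) := by exact_mod_cast hQpos
    set δ : ℝ := 1 / (4 * (b:ℝ) * (Q:ℝ)) with hδdef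
    have hδpos : 0 < δ := by
      rw [hδdef]
      have : (0:ℝ) < 4 * (b:ℝ) * (Q:ℝ) := by positivity
      exact div_pos one_pos this
    set R : Set ℝ := {y | y ∈ S ∧ ∀ p ∈ L, δ ≤ |y - p|} with hRdef
    have hRfin : R.Finite := by
      rcases R.finite_or_infinite with h | h
      · exact h
      · exfalso
        obtain ⟨p, hpcl, hpL⟩ := exists_left_accumulation hWF hSbdd (fun y hy => hy.1) h
        obtain ⟨y, hyR, hyd⟩ := Metric.mem_closure_iff.1 hpcl δ hδpos
        have h1 : δ ≤ |y - p| := hyR.2 p hpL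
        rw [Real.dist_eq, abs_sub_comm] at hyd
        linarith
    have hIfin : (s ⁻¹' R).Finite := hRfin.preimage hs_inj.injOn
    obtain ⟨N0, hN0⟩ := hIfin.bddAbove
    have hnear : ∀ i, N0 + 1 ≤ i → ∃ p ∈ L, |s i - p| < δ := by
      intro i hi
      have hnotR : s i ∉ R := by
        intro hmem
        have : i ≤ N0 := hN0 hmem
        omega
      have h2 : ¬ ∀ p ∈ L, δ ≤ |s i - p| := fun hall => hnotR ⟨hs_mem i, hall⟩
      push_neg at h2
      obtain ⟨p, hp1, hp2⟩ := h2
      exact ⟨p, hp1, hp2⟩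
    set e : ℕ → ℝ := fun i => |(Q:ℝ) * s i - (round ((Q:ℝ) * s i) : ℝ)| with hedef
    have hebound : ∀ i, N0 + 1 ≤ i → e i < 1 / (4 * (b:ℝ)) := by
      intro i hi
      obtain ⟨p, hpL, hclose⟩ := hnear i hi
      obtain ⟨k, hk⟩ := hQ p hpL
      have h1 : e i ≤ |(Q:ℝ) * s i - (k:ℝ)| := round_le _ k
      have h2 : |(Q:ℝ) * s i - (k:ℝ)| = (Q:ℝ) * |s i - p| := by
        rw [← hk, ← mul_sub, abs_mul, abs_of_nonneg hQR.le]
      have h3 : (Q:ℝ) * |s i - p| < (Q:ℝ) * δ := mul_lt_mul_of_pos_left hclose hQR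
      have h4 : (Q:ℝ) * δ = 1 / (4 * (b:ℝ)) := by
        rw [hδdef]
        field_simp
      linarith
    have hstep : ∀ i, N0 + 1 ≤ i → e (i+1) = (b:ℝ) * e i := by
      intro i hi
      have hsmall : (b:ℝ) * e i < 1/2 := by
        have h5 := hebound i hi
        have h6 : (b:ℝ) * e i < (b:ℝ) * (1/(4*(b:ℝ))) := mul_lt_mul_of_pos_left h5 hbpos
        have h7 : (b:ℝ) * (1/(4*(b:ℝ))) = 1/4 := by field_simp
        linarith
      have hkey := round_mul_step hb (t := (Q:ℝ) * s i) hsmall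
      have h1 : (Q:ℝ) * s (i+1) = (b:ℝ) * ((Q:ℝ) * s i) - ((Q * ⌊(b:ℝ) * s i⌋ : ℤ) : ℝ) := by
        rw [hs_rec i, Int.fract]
        push_cast
        ring
      show |(Q:ℝ) * s (i+1) - (round ((Q:ℝ) * s (i+1)) : ℝ)| = (b:ℝ) * e i
      rw [h1, round_sub_intCast]
      rw [show ((round ((b:ℝ) * ((Q:ℝ) * s i)) - Q * ⌊(b:ℝ) * s i⌋ : ℤ) : ℝ)
          = (round ((b:ℝ) * ((Q:ℝ) * s i)) : ℝ) - ((Q * ⌊(b:ℝ) * s i⌋ : ℤ) : ℝ) by push_cast; ring]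
      rw [show (b:ℝ) * ((Q:ℝ) * s i) - ((Q * ⌊(b:ℝ) * s i⌋ : ℤ) : ℝ)
          - ((round ((b:ℝ) * ((Q:ℝ) * s i)) : ℝ) - ((Q * ⌊(b:ℝ) * s i⌋ : ℤ) : ℝ))
          = (b:ℝ) * ((Q:ℝ) * s i) - (round ((b:ℝ) * ((Q:ℝ) * s i)) : ℝ) by ring]
      exact hkey
    have hgrow : ∀ j, e (N0 + 1 + j) = (b:ℝ)^j * e (N0 + 1) := by
      intro j
      induction j with
      | zero => simp
      | succ j ih =>
        have h5 := hstep (N0 + 1 + j) (by omega)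
        rw [show N0 + 1 + (j+1) = (N0 + 1 + j) + 1 by omega, h5, ih]
        ring
    have heNpos : 0 < e (N0 + 1) := by
      rcases eq_or_lt_of_le (abs_nonneg ((Q:ℝ) * s (N0+1) - (round ((Q:ℝ) * s (N0+1)) : ℝ))) with h | h
      · exfalso
        have h0 : (Q:ℝ) * s (N0+1) - (round ((Q:ℝ) * s (N0+1)) : ℝ) = 0 := abs_eq_zero.1 h.symm
        have hform : (Q:ℝ) * s (N0+1) = (Q:ℝ) * (x * (b:ℝ)^(N0+1)) - (Q:ℝ) * ((⌊x * (b:ℝ)^(N0+1)⌋ : ℤ) : ℝ) := by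
          show (Q:ℝ) * Int.fract (x * (b:ℝ)^(N0+1)) = _
          rw [Int.fract]
          ring
        have hfin2 : x * (((Q:ℤ) * (b:ℤ)^(N0+1) : ℤ) : ℝ)
            = ((round ((Q:ℝ) * s (N0+1)) + (Q:ℤ) * ⌊x * (b:ℝ)^(N0+1)⌋ : ℤ) : ℝ) := by
          push_cast
          linear_combination h0 - hform
        have hbz : (0:ℤ) < (b:ℤ) := by exact_mod_cast (by omega : 0 < b)
        have hdnz : (Q:ℤ) * (b:ℤ)^(N0+1) ≠ 0 :=
          (mul_pos (by exact_mod_cast hQpos) (pow_pos hbz (N0+1))).ne'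
        obtain ⟨r, hr⟩ := rat_of_mul_eq hdnz hfin2
        exact hirr r hr
      · exact h
    obtain ⟨j, hj⟩ := pow_unbounded_of_one_lt ((1/(4*(b:ℝ))) / e (N0+1)) hbR
    have h1 : 1/(4*(b:ℝ)) < (b:ℝ)^j * e (N0+1) := by
      rw [div_lt_iff₀ heNpos] at hj
      linarith
    have h2 := hebound (N0 + 1 + j) (by omega)
    rw [hgrow j] at h2
    linarith
  · -- L infinite : order type at least ω²
    have hLWF : L.IsWF := by
      rw [Set.isWF_iff_no_descending_seq]
      intro f hf hfL
      have hpick : ∀ n : ℕ, (S ∩ Set.Ioo (f (n+1)) (f n)).Nonempty := fun n =>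
        (hfL n) (f (n+1)) (hf (Nat.lt_succ_self n))
      choose t ht using hpick
      have hanti : StrictAnti t := strictAnti_nat_of_succ_lt fun n =>
        lt_trans (ht (n+1)).2.2 (ht n).2.1
      exact Set.isWF_iff_no_descending_seq.1 hWF t hanti (fun n => (ht n).1)
    obtain ⟨f, hfmono, hfL⟩ := exists_strictMono_mem hLWF hLinf
    have hblock : ∀ n, (S ∩ Set.Ioo (f n) (f (n+1))).Infinite := fun n =>
      infinite_inter_Ioo (hfL (n+1)) (hfmono (Nat.lt_succ_self n))
    have hex : ∀ n, ∃ g : ℕ → ℝ, StrictMono g ∧ ∀ k, g k ∈ S ∩ Set.Ioo (f n) (f (n+1)) :=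
      fun n => exists_strictMono_mem (hWF.mono Set.inter_subset_left) (hblock n)
    choose g hg1 hg2 using hex
    have hord : Ordinal.omega0 ^ 2 ≤ orderType S hWF := by
      refine omega0_sq_le_orderType hWF g (fun n k => (hg2 n k).1) ?_
      rintro ⟨n, k⟩ ⟨n', k'⟩ hlex
      rw [Prod.lex_def] at hlex
      rcases hlex with h | ⟨heq2, h⟩
      · calc g n k < f (n+1) := (hg2 n k).2.2
        _ ≤ f n' := hfmono.monotone (by simp only at h; omega)
        _ < g n' k' := (hg2 n' k').2.1
      · simp only at heq2 h
        subst heq2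
        exact hg1 n h
    exact absurd hω2 (not_lt.2 hord)
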